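/- Let I = [a,b], let A : ℝ → M₂(ℍ) be continuous on I, let t₀ ∈ I, and let M : ℝ → M₂(ℍ) be a fundamental matrix on I, i.e. M is differentiable with M'(t) = A(t)M(t) and M(t) is invertible for every t ∈ I. Then every solution x of x' = A(t)x on I satisfies x(t) = M(t)⬝(M(t₀)⁻¹⬝x(t₀)) for all t ∈ I; in particular, every solution has the form x(t) = M(t)⬝q for a constant vector q ∈ ℍ². -/

import Mathlib

open Matrix

/-- If `M` is a fundamental matrix of `x' = A(t) x` on `I = [a,b]`, every solution `x`
satisfies `x(t) = M(t) (M(t₀)⁻¹ x(t₀))`; in particular every solution has the form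
`x(t) = M(t) q` for a constant quaternionic vector `q`. -/
theorem solution_eq_fundamentalMatrix_mulVec (a b : ℝ)
    (A : ℝ → Matrix (Fin 2) (Fin 2) (Quaternion ℝ))
    (hA : ContinuousOn A (Set.Icc a b))
    (t₀ : ℝ) (ht₀ : t₀ ∈ Set.Icc a b)
    (M : ℝ → Matrix (Fin 2) (Fin 2) (Quaternion ℝ))
    (hM : ∀ t ∈ Set.Icc a b, ∀ i j, HasDerivAt (fun s => M s i j) ((A t * M t) i j) t)
    (hMunit : ∀ t ∈ Set.Icc a b, IsUnit (M t))
    (x : ℝ → Fin 2 → Quaternion ℝ)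
    (hx : ∀ t ∈ Set.Icc a b, HasDerivAt x ((A t).mulVec (x t)) t) :
    (∀ t ∈ Set.Icc a b, x t = (M t).mulVec ((Ring.inverse (M t₀)).mulVec (x t₀))) ∧
    ∃ q : Fin 2 → Quaternion ℝ, ∀ t ∈ Set.Icc a b, x t = (M t).mulVec q := by
  have hab : a ≤ b := le_trans ht₀.1 ht₀.2
  -- the constant vector and the candidate solution
  set q : Fin 2 → Quaternion ℝ := (Ring.inverse (M t₀)).mulVec (x t₀) with hq
  set g : ℝ → Fin 2 → Quaternion ℝ := fun t => (M t).mulVec q with hgdef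
  -- g solves the same ODE
  have hg' : ∀ t ∈ Set.Icc a b, HasDerivAt g ((A t).mulVec (g t)) t := by
    intro t ht
    have : HasDerivAt g ((A t * M t).mulVec q) t := by
      rw [hasDerivAt_pi]
      intro i
      have := HasDerivAt.fun_sum (fun j (_ : j ∈ Finset.univ) => (hM t ht i j).mul_const (q j))
      simpa only [hgdef, Matrix.mulVec, dotProduct] using this
    simpa only [hgdef, Matrix.mulVec_mulVec] using this
  have hgt₀ : x t₀ = g t₀ := by
    simp only [hgdef, hq, Matrix.mulVec_mulVec, Ring.mul_inverse_cancel _ (hMunit t₀ ht₀),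
      Matrix.one_mulVec]
  -- a uniform bound for the entries of A on [a,b]
  have hcont : ContinuousOn (fun t => ∑ i, ∑ j, ‖A t i j‖) (Set.Icc a b) := by
    apply continuousOn_finset_sum
    intro i _
    apply continuousOn_finset_sum
    intro j _
    exact (((continuous_apply j).comp (continuous_apply i)).comp_continuousOn hA).norm
  obtain ⟨C, hC⟩ := (isCompact_Icc).exists_bound_of_continuousOn hcont
  have hC' : ∀ t ∈ Set.Icc a b, (∑ i, ∑ j, ‖A t i j‖) ≤ C := fun t ht =>
    (le_abs_self _).trans (by simpa [Real.norm_eq_abs] using hC t ht)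
  have hC0 : 0 ≤ C := le_trans (Finset.sum_nonneg fun i _ =>
    Finset.sum_nonneg fun j _ => norm_nonneg _) (hC' t₀ ht₀)
  -- Lipschitz bound for mulVec
  have hlip : ∀ (B : Matrix (Fin 2) (Fin 2) (Quaternion ℝ)), (∑ i, ∑ j, ‖B i j‖) ≤ C →
      LipschitzOnWith C.toNNReal (fun y : Fin 2 → Quaternion ℝ => B.mulVec y)
        (Set.univ : Set (Fin 2 → Quaternion ℝ)) := by
    intro B hB
    apply LipschitzOnWith.of_dist_le_mul
    intro u _ w _
    rw [dist_eq_norm, dist_eq_norm, ← Matrix.mulVec_sub,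
      Real.coe_toNNReal C hC0]
    set z := u - w
    rw [pi_norm_le_iff_of_nonneg (mul_nonneg hC0 (norm_nonneg _))]
    intro i
    calc ‖B.mulVec z i‖ ≤ ∑ j, ‖B i j‖ * ‖z j‖ := by
            simpa [Matrix.mulVec, dotProduct] using
              norm_sum_le_of_le Finset.univ (fun j _ => norm_mul_le (B i j) (z j))
      _ ≤ ∑ j, ‖B i j‖ * ‖z‖ := Finset.sum_le_sum fun j _ =>
            mul_le_mul_of_nonneg_left (norm_le_pi_norm z j) (norm_nonneg _)
      _ = (∑ j, ‖B i j‖) * ‖z‖ := (Finset.sum_mul _ _ _).symm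
      _ ≤ C * ‖z‖ := by
            apply mul_le_mul_of_nonneg_right _ (norm_nonneg _)
            exact le_trans (Finset.single_le_sum (f := fun i => ∑ j, ‖B i j‖)
              (fun i _ => Finset.sum_nonneg fun j _ => norm_nonneg _) (Finset.mem_univ i)) hB
  -- the clamped vector field
  set c : ℝ → ℝ := fun t => max a (min t b) with hcdef
  have hcmem : ∀ t, c t ∈ Set.Icc a b := fun t =>
    ⟨le_max_left _ _, max_le hab (min_le_right _ _)⟩
  have hceq : ∀ t ∈ Set.Icc a b, c t = t := fun t ht => by
    simp [hcdef, min_eq_left ht.2, max_eq_right ht.1]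
  set v : ℝ → (Fin 2 → Quaternion ℝ) → (Fin 2 → Quaternion ℝ) :=
    fun t y => (A (c t)).mulVec y with hvdef
  have hv : ∀ t, LipschitzOnWith C.toNNReal (v t)
      (Set.univ : Set (Fin 2 → Quaternion ℝ)) := fun t => hlip _ (hC' _ (hcmem t))
  -- continuity of x and g
  have hxc : ContinuousOn x (Set.Icc a b) := fun t ht =>
    ((hx t ht).continuousAt).continuousWithinAt
  have hgc : ContinuousOn g (Set.Icc a b) := fun t ht =>
    ((hg' t ht).continuousAt).continuousWithinAt
  -- uniqueness on the two halves
  have heq : Set.EqOn x g (Set.Icc a b) := by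
    rw [← Set.Icc_union_Icc_eq_Icc ht₀.1 ht₀.2]
    apply Set.EqOn.union
    · apply ODE_solution_unique_of_mem_Icc_left (fun t _ => hv t)
        (hxc.mono (Set.Icc_subset_Icc_right ht₀.2))
        (fun t ht => ?_) (fun _ _ => Set.mem_univ _)
        (hgc.mono (Set.Icc_subset_Icc_right ht₀.2))
        (fun t ht => ?_) (fun _ _ => Set.mem_univ _) hgt₀
      · have ht' : t ∈ Set.Icc a b := ⟨ht.1.le, ht.2.trans ht₀.2⟩
        have := (hx t ht').hasDerivWithinAt (s := Set.Iic t)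
        simpa only [hvdef, hceq t ht'] using this
      · have ht' : t ∈ Set.Icc a b := ⟨ht.1.le, ht.2.trans ht₀.2⟩
        have := (hg' t ht').hasDerivWithinAt (s := Set.Iic t)
        simpa only [hvdef, hceq t ht'] using this
    · apply ODE_solution_unique_of_mem_Icc_right (fun t _ => hv t)
        (hxc.mono (Set.Icc_subset_Icc_left ht₀.1))
        (fun t ht => ?_) (fun _ _ => Set.mem_univ _)
        (hgc.mono (Set.Icc_subset_Icc_left ht₀.1))
        (fun t ht => ?_) (fun _ _ => Set.mem_univ _) hgt₀
      · have ht' : t ∈ Set.Icc a b := ⟨ht₀.1.trans ht.1, ht.2.le⟩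
        have := (hx t ht').hasDerivWithinAt (s := Set.Ici t)
        simpa only [hvdef, hceq t ht'] using this
      · have ht' : t ∈ Set.Icc a b := ⟨ht₀.1.trans ht.1, ht.2.le⟩
        have := (hg' t ht').hasDerivWithinAt (s := Set.Ici t)
        simpa only [hvdef, hceq t ht'] using this
  exact ⟨fun t ht => heq ht, ⟨q, fun t ht => heq ht⟩⟩
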